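/- Let n be a positive integer and let K_n be a random formal context distributed according to κ_{n,1/2,1/2}. With a_n = ⌊log n / log 2⌋, b_n = ⌊log n / log 2⌋ + 2{n/2}, c_n = d_n = ⌊n/2⌋ − ⌊log n / log 2⌋, and t_n = C(n; a_n, b_n, c_n, d_n) · (1/2)^{a_n + c_n} (1/2)^{b_n + d_n} (1/2)^{a_n b_n} (1 − 2^{−a_n})^{d_n} (1 − 2^{−b_n})^{c_n}, the expected number of formal concepts satisfies E[|𝔅(K_n)|] ≥ t_n. -/

import Mathlib

open Finset

/-- For a formal context with object set `G ⊆ {1,…,n}`, attribute set `Gᶜ` and incidence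
relation `I ⊆ G × Gᶜ`: the set `A'` of attributes shared by all objects in `A`. -/
def extentDeriv (n : ℕ) (G : Finset (Fin n)) (I : Finset (Fin n × Fin n))
    (A : Finset (Fin n)) : Finset (Fin n) :=
  Gᶜ.filter fun m => ∀ g ∈ A, (g, m) ∈ I

/-- The set `B'` of objects having all attributes in `B`. -/
def intentDeriv (n : ℕ) (G : Finset (Fin n)) (I : Finset (Fin n × Fin n))
    (B : Finset (Fin n)) : Finset (Fin n) :=
  G.filter fun g => ∀ m ∈ B, (g, m) ∈ I

/-- `(A, B)` is a formal concept of the context `(G, Gᶜ, I)`. -/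
def IsConcept (n : ℕ) (G : Finset (Fin n)) (I : Finset (Fin n × Fin n))
    (A B : Finset (Fin n)) : Prop :=
  A ⊆ G ∧ B ⊆ Gᶜ ∧ extentDeriv n G I A = B ∧ intentDeriv n G I B = A

instance (n : ℕ) (G : Finset (Fin n)) (I : Finset (Fin n × Fin n)) (A B : Finset (Fin n)) :
    Decidable (IsConcept n G I A B) := by
  unfold IsConcept; infer_instance

/-- The number `|𝔅(K)|` of formal concepts of the context `K = (G, Gᶜ, I)`. -/
def numConcepts (n : ℕ) (G : Finset (Fin n)) (I : Finset (Fin n × Fin n)) : ℕ :=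
  (Finset.univ.filter fun AB : Finset (Fin n) × Finset (Fin n) =>
    IsConcept n G I AB.1 AB.2).card

/-- The probability `κ_{n,p,q}{(G, Gᶜ, I)}` of a single context. -/
noncomputable def kappa (n : ℕ) (p q : ℝ) (G : Finset (Fin n))
    (I : Finset (Fin n × Fin n)) : ℝ :=
  p ^ G.card * (1 - p) ^ Gᶜ.card * q ^ I.card * (1 - q) ^ ((G ×ˢ Gᶜ).card - I.card)

/-- The expected number of formal concepts `E[|𝔅(K)|]` for `K ~ κ_{n,p,q}`:
the sum over the finite sample space `Ω_n` (all contexts `(G, Gᶜ, I)` with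
`I ⊆ G × Gᶜ`) of the number of concepts weighted by `κ_{n,p,q}`. -/
noncomputable def expectedConcepts (n : ℕ) (p q : ℝ) : ℝ :=
  ∑ G : Finset (Fin n), ∑ I ∈ (G ×ˢ Gᶜ).powerset,
    (numConcepts n G I : ℝ) * kappa n p q G I

/-- `a_n = ⌊log n / log 2⌋` (integer part; `log` is the natural logarithm). -/
noncomputable def aSeq (n : ℕ) : ℕ := ⌊Real.log n / Real.log 2⌋₊

/-- `b_n = ⌊log n / log 2⌋ + 2{n/2}`, where `2{n/2}` is `0` if `n` is even and `1` if odd. -/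
noncomputable def bSeq (n : ℕ) : ℕ := aSeq n + n % 2

/-- `c_n = d_n = ⌊n/2⌋ − ⌊log n / log 2⌋`. -/
noncomputable def cSeq (n : ℕ) : ℕ := n / 2 - aSeq n

/-- The multinomial coefficient `C(n; a_n, b_n, c_n, d_n) = n!/(a_n! b_n! c_n! d_n!)`
(the subtraction `c_n = ⌊n/2⌋ − a_n` is exact and `a_n + b_n + c_n + d_n = n`). -/
noncomputable def multinomialSeq (n : ℕ) : ℝ :=
  (n.factorial : ℝ) /
    ((aSeq n).factorial * (bSeq n).factorial * (cSeq n).factorial * (cSeq n).factorial)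

/-- The singled-out term
`t_n = C(n; a_n,b_n,c_n,d_n) (1/2)^{a_n+c_n} (1/2)^{b_n+d_n} (1/2)^{a_n b_n}
       (1 − 2^{−a_n})^{d_n} (1 − 2^{−b_n})^{c_n}` with `d_n = c_n`. -/
noncomputable def tSeq (n : ℕ) : ℝ :=
  multinomialSeq n *
    ((1 / 2 : ℝ) ^ (aSeq n + cSeq n) * (1 / 2 : ℝ) ^ (bSeq n + cSeq n) *
      (1 / 2 : ℝ) ^ (aSeq n * bSeq n) *
      (1 - (2 : ℝ) ^ (-(aSeq n : ℤ))) ^ cSeq n *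
      (1 - (2 : ℝ) ^ (-(bSeq n : ℤ))) ^ cSeq n)

lemma split_lemma {α : Type*} [DecidableEq α] (u : Finset α)
    (q : α → Prop) [DecidablePred q] (P Q : Finset α → Prop) [DecidablePred P] [DecidablePred Q] :
    (u.powerset.filter fun I => P (I.filter q) ∧ Q (I.filter fun z => ¬ q z)).card
      = ((u.filter q).powerset.filter P).card *
        ((u.filter fun z => ¬ q z).powerset.filter Q).card := by
  rw [← card_product]
  refine card_bij' (fun I _ => (I.filter q, I.filter fun z => ¬ q z))
    (fun JK _ => JK.1 ∪ JK.2) ?_ ?_ ?_ ?_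
  · rintro I hI
    simp only [mem_filter, mem_powerset] at hI
    simp only [mem_product, mem_filter, mem_powerset]
    exact ⟨⟨filter_subset_filter _ hI.1, hI.2.1⟩, ⟨filter_subset_filter _ hI.1, hI.2.2⟩⟩
  · rintro ⟨J, K⟩ hJK
    simp only [mem_product, mem_filter, mem_powerset] at hJK
    obtain ⟨⟨hJu, hPJ⟩, ⟨hKu, hQK⟩⟩ := hJK
    have hJq : ∀ z ∈ J, q z := fun z hz => (mem_filter.mp (hJu hz)).2
    have hKq : ∀ z ∈ K, ¬ q z := fun z hz => (mem_filter.mp (hKu hz)).2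
    have h1 : (J ∪ K).filter q = J := by
      rw [filter_union, filter_eq_self.mpr hJq, filter_false_of_mem hKq, union_empty]
    have h2 : (J ∪ K).filter (fun z => ¬ q z) = K := by
      rw [filter_union, filter_false_of_mem (by simpa using hJq), filter_eq_self.mpr hKq,
        empty_union]
    simp only [mem_filter, mem_powerset, h1, h2]
    exact ⟨union_subset (hJu.trans (filter_subset _ _)) (hKu.trans (filter_subset _ _)), hPJ, hQK⟩
  · intro I hI
    exact filter_union_filter_not_eq q I
  · rintro ⟨J, K⟩ hJK
    simp only [mem_product, mem_filter, mem_powerset] at hJK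
    obtain ⟨⟨hJu, hPJ⟩, ⟨hKu, hQK⟩⟩ := hJK
    have hJq : ∀ z ∈ J, q z := fun z hz => (mem_filter.mp (hJu hz)).2
    have hKq : ∀ z ∈ K, ¬ q z := fun z hz => (mem_filter.mp (hKu hz)).2
    have h1 : (J ∪ K).filter q = J := by
      rw [filter_union, filter_eq_self.mpr hJq, filter_false_of_mem hKq, union_empty]
    have h2 : (J ∪ K).filter (fun z => ¬ q z) = K := by
      rw [filter_union, filter_false_of_mem (by simpa using hJq), filter_eq_self.mpr hKq,
        empty_union]
    simp [h1, h2]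

lemma keycount {α β : Type*} [DecidableEq α] [DecidableEq β]
    (k : β → α) (p : α → Finset β → Prop) [∀ x r, Decidable (p x r)] :
    ∀ (s : Finset α) (u : Finset β), (∀ y ∈ u, k y ∈ s) →
    (u.powerset.filter fun I => ∀ x ∈ s, p x (I.filter fun z => k z = x)).card
      = ∏ x ∈ s, ((u.filter fun z => k z = x).powerset.filter (p x)).card := by
  intro s
  induction s using Finset.induction_on with
  | empty =>
    intro u hu
    have hu0 : u = ∅ := eq_empty_of_forall_notMem fun y hy => (notMem_empty _) (hu y hy)
    subst hu0
    simp
  | @insert x s hx ih =>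
    intro u hu
    have hstep : (u.powerset.filter fun I => ∀ y ∈ insert x s,
          p y (I.filter fun z => k z = y)).card
        = (u.powerset.filter fun I => p x (I.filter fun z => k z = x) ∧
            (∀ y ∈ s, p y ((I.filter fun z => ¬ k z = x).filter fun z => k z = y))).card := by
      apply congrArg
      apply filter_congr
      intro I _
      rw [forall_mem_insert]
      constructor
      · rintro ⟨h1, h2⟩
        refine ⟨h1, fun y hy => ?_⟩
        have : (I.filter fun z => ¬ k z = x).filter (fun z => k z = y)
            = I.filter fun z => k z = y := by
          rw [filter_filter]
          apply filter_congr
          intro z _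
          constructor
          · rintro ⟨_, h⟩; exact h
          · intro h; exact ⟨fun hc => hx (hc ▸ h ▸ hy), h⟩
        rw [this]; exact h2 y hy
      · rintro ⟨h1, h2⟩
        refine ⟨h1, fun y hy => ?_⟩
        have : (I.filter fun z => ¬ k z = x).filter (fun z => k z = y)
            = I.filter fun z => k z = y := by
          rw [filter_filter]
          apply filter_congr
          intro z _
          constructor
          · rintro ⟨_, h⟩; exact h
          · intro h; exact ⟨fun hc => hx (hc ▸ h ▸ hy), h⟩
        rw [← this]; exact h2 y hy
    rw [hstep, split_lemma u (fun z => k z = x) (p x)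
      (fun K => ∀ y ∈ s, p y (K.filter fun z => k z = y)),
      ih (u.filter fun z => ¬ k z = x) (fun y hy => by
        rcases mem_filter.mp hy with ⟨hyu, hyx⟩
        rcases mem_insert.mp (hu y hyu) with h | h
        · exact absurd h hyx
        · exact h),
      prod_insert hx]
    congr 1
    apply prod_congr rfl
    intro y hy
    have he : (u.filter fun z => ¬ k z = x).filter (fun z => k z = y)
        = u.filter fun z => k z = y := by
      rw [filter_filter]
      apply filter_congr
      intro z _
      constructor
      · rintro ⟨_, h⟩; exact h
      · intro h; exact ⟨fun hc => hx (hc ▸ h ▸ hy), h⟩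
    rw [he]

lemma card_pf_eq {β : Type*} [DecidableEq β] (v : Finset β) :
    (v.powerset.filter (· = v)).card = 1 := by
  have : v.powerset.filter (· = v) = {v} := by
    ext r; simp only [mem_filter, mem_powerset, mem_singleton]
    exact ⟨fun h => h.2, fun h => ⟨h ▸ Subset.refl v, h⟩⟩
  rw [this, card_singleton]

lemma card_pf_ne {β : Type*} [DecidableEq β] (v : Finset β) :
    (v.powerset.filter (· ≠ v)).card = 2 ^ v.card - 1 := by
  have h := card_filter_add_card_filter_not (s := v.powerset) (p := (· = v))
  rw [card_pf_eq] at h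
  simp only [ne_eq]
  rw [← card_powerset v]
  omega
  
lemma card_pf_subset {β : Type*} [DecidableEq β] (w v : Finset β) (h : w ⊆ v) :
    (v.powerset.filter (fun r => w ⊆ r)).card = 2 ^ (v \ w).card := by
  rw [← card_powerset]
  refine card_bij' (fun r _ => r \ w) (fun r _ => r ∪ w) ?_ ?_ ?_ ?_
  · intro r hr
    simp only [mem_filter, mem_powerset] at hr ⊢
    exact sdiff_subset_sdiff hr.1 (Subset.refl w)
  · intro r hr
    simp only [mem_powerset] at hr
    simp only [mem_filter, mem_powerset]
    exact ⟨union_subset (hr.trans (sdiff_subset)) h, subset_union_right⟩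
  · intro r hr
    simp only [mem_filter, mem_powerset] at hr
    exact sdiff_union_of_subset hr.2
  · intro r hr
    simp only [mem_powerset] at hr
    have hd : Disjoint r w := sdiff_disjoint.mono_left hr
    simp only [union_sdiff_right]
    exact sdiff_eq_self_of_disjoint hd

lemma card_pf_not_subset {β : Type*} [DecidableEq β] (w v : Finset β) (h : w ⊆ v) :
    (v.powerset.filter (fun r => ¬ w ⊆ r)).card = 2 ^ v.card - 2 ^ (v \ w).card := by
  have h2 := card_filter_add_card_filter_not (s := v.powerset) (p := fun r => w ⊆ r)
  rw [card_pf_subset w v h, card_powerset] at h2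
  omega

lemma isConcept_iff (n : ℕ) (G A B : Finset (Fin n)) (I : Finset (Fin n × Fin n))
    (hA : A ⊆ G) (hB : B ⊆ Gᶜ) :
    IsConcept n G I A B ↔
      (∀ g ∈ G, (g ∈ A ↔ ∀ m ∈ B, (g, m) ∈ I)) ∧
      (∀ m ∈ Gᶜ, m ∉ B → ∃ g ∈ A, (g, m) ∉ I) := by
  unfold IsConcept extentDeriv intentDeriv
  constructor
  · rintro ⟨-, -, hext, hint⟩
    constructor
    · intro g hg
      constructor
      · intro hgA
        have := hint ▸ hgA
        exact (mem_filter.mp this).2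
      · intro hall
        rw [← hint]
        exact mem_filter.mpr ⟨hg, hall⟩
    · intro m hm hmB
      by_contra hc
      push_neg at hc
      exact hmB (hext ▸ mem_filter.mpr ⟨hm, hc⟩)
  · rintro ⟨h1, h2⟩
    refine ⟨hA, hB, ?_, ?_⟩
    · ext m
      simp only [mem_filter]
      constructor
      · rintro ⟨hm, hall⟩
        by_contra hmB
        obtain ⟨g, hgA, hgm⟩ := h2 m hm hmB
        exact hgm (hall g hgA)
      · intro hmB
        refine ⟨hB hmB, fun g hgA => ?_⟩
        exact ((h1 g (hA hgA)).mp hgA) m hmB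
    · ext g
      simp only [mem_filter]
      constructor
      · rintro ⟨hg, hall⟩
        exact (h1 g hg).mpr hall
      · intro hgA
        exact ⟨hA hgA, (h1 g (hA hgA)).mp hgA⟩

lemma concept_count (n : ℕ) (G A B : Finset (Fin n)) (hA : A ⊆ G) (hB : B ⊆ Gᶜ) :
    ((G ×ˢ Gᶜ).powerset.filter fun I => IsConcept n G I A B).card
      = (2 ^ B.card - 1) ^ (G.card - A.card)
        * (2 ^ G.card - 2 ^ (G.card - A.card)) ^ (Gᶜ.card - B.card) := by
  classical
  set S := G ×ˢ Gᶜ with hS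
  -- step 1: rewrite the predicate into split form
  have hstep : (S.powerset.filter fun I => IsConcept n G I A B) =
      S.powerset.filter fun I =>
        (∀ g ∈ G, (g ∈ A ↔ (I.filter fun z => z.2 ∈ B).filter (fun z => z.1 = g) = {g} ×ˢ B))
        ∧ (∀ m ∈ Gᶜ \ B, ¬ (A ×ˢ {m} ⊆ (I.filter fun z => ¬ z.2 ∈ B).filter fun z => z.2 = m)) := by
    apply filter_congr
    intro I hImem
    rw [mem_powerset] at hImem
    rw [isConcept_iff n G A B I hA hB]
    constructor
    · rintro ⟨h1, h2⟩
      constructor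
      · intro g hg
        rw [h1 g hg]
        constructor
        · intro hall
          apply Subset.antisymm
          · intro z hz
            rw [mem_product, mem_singleton]
            have h1' := mem_filter.mp hz
            have h2' := mem_filter.mp h1'.1
            exact ⟨h1'.2, h2'.2⟩
          · intro z hz
            rw [mem_product, mem_singleton] at hz
            have : z = (g, z.2) := by rw [← hz.1]
            rw [this]
            exact mem_filter.mpr ⟨mem_filter.mpr ⟨hall z.2 hz.2, hz.2⟩, rfl⟩
        · intro heq m hm
          have : (g, m) ∈ ({g} ×ˢ B : Finset _) := by
            rw [mem_product, mem_singleton]; exact ⟨rfl, hm⟩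
          rw [← heq] at this
          exact (mem_filter.mp (mem_filter.mp this).1).1
      · intro m hm
        rw [mem_sdiff] at hm
        obtain ⟨g, hgA, hgm⟩ := h2 m hm.1 hm.2
        intro hc
        have : (g, m) ∈ (I.filter fun z => ¬ z.2 ∈ B).filter fun z => z.2 = m := by
          apply hc; rw [mem_product, mem_singleton]; exact ⟨hgA, rfl⟩
        simp only [mem_filter] at this
        exact hgm this.1.1
    · rintro ⟨h1, h2⟩
      constructor
      · intro g hg
        rw [h1 g hg]
        constructor
        · intro heq m hm
          have : (g, m) ∈ ({g} ×ˢ B : Finset _) := by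
            rw [mem_product, mem_singleton]; exact ⟨rfl, hm⟩
          rw [← heq] at this
          exact (mem_filter.mp (mem_filter.mp this).1).1
        · intro hall
          apply Subset.antisymm
          · intro z hz
            rw [mem_product, mem_singleton]
            have h1' := mem_filter.mp hz
            have h2' := mem_filter.mp h1'.1
            exact ⟨h1'.2, h2'.2⟩
          · intro z hz
            rw [mem_product, mem_singleton] at hz
            have : z = (g, z.2) := by rw [← hz.1]
            rw [this]
            exact mem_filter.mpr ⟨mem_filter.mpr ⟨hall z.2 hz.2, hz.2⟩, rfl⟩
      · intro m hm hmB
        have hmem : m ∈ Gᶜ \ B := mem_sdiff.mpr ⟨hm, hmB⟩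
        by_contra hc
        push_neg at hc
        apply h2 m hmem
        intro z hz
        rw [mem_product, mem_singleton] at hz
        have : z = (z.1, m) := by rw [← hz.2]
        rw [this]
        exact mem_filter.mpr ⟨mem_filter.mpr ⟨hc z.1 hz.1, hmB⟩, rfl⟩
  rw [hstep, split_lemma S (fun z => z.2 ∈ B)
    (fun J => ∀ g ∈ G, (g ∈ A ↔ J.filter (fun z => z.1 = g) = {g} ×ˢ B))
    (fun K => ∀ m ∈ Gᶜ \ B, ¬ (A ×ˢ {m} ⊆ K.filter fun z => z.2 = m))]
  -- first factor
  have hf1 : ((S.filter fun z => z.2 ∈ B).powerset.filter fun J =>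
      ∀ g ∈ G, (g ∈ A ↔ J.filter (fun z => z.1 = g) = {g} ×ˢ B)).card
      = (2 ^ B.card - 1) ^ (G.card - A.card) := by
    have hk := keycount (fun z : Fin n × Fin n => z.1)
      (fun g r => g ∈ A ↔ r = {g} ×ˢ B) G (S.filter fun z => z.2 ∈ B)
      (fun y hy => (mem_product.mp (mem_filter.mp hy).1).1)
    have hrow : ∀ g ∈ G, (S.filter fun z => z.2 ∈ B).filter (fun z => z.1 = g) = {g} ×ˢ B := by
      intro g hg
      ext z
      constructor
      · intro hz
        have h1 := mem_filter.mp hz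
        have h2 := mem_filter.mp h1.1
        rw [mem_product, mem_singleton]
        exact ⟨h1.2, h2.2⟩
      · intro hz
        rw [mem_product, mem_singleton] at hz
        refine mem_filter.mpr ⟨mem_filter.mpr ⟨?_, hz.2⟩, hz.1⟩
        rw [hS, mem_product]
        exact ⟨hz.1 ▸ hg, hB hz.2⟩
    have hper : ∀ g ∈ G, (((S.filter fun z => z.2 ∈ B).filter (fun z => z.1 = g)).powerset.filter
        fun r => g ∈ A ↔ r = {g} ×ˢ B).card = if g ∈ A then 1 else 2 ^ B.card - 1 := by
      intro g hg
      rw [hrow g hg]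
      by_cases hgA : g ∈ A
      · rw [if_pos hgA, ← card_pf_eq ({g} ×ˢ B)]
        congr 1
        apply filter_congr
        intro r _
        simp [hgA]
      · rw [if_neg hgA]
        have hcard : ({g} ×ˢ B : Finset _).card = B.card := by
          rw [card_product, card_singleton, one_mul]
        rw [← hcard, ← card_pf_ne ({g} ×ˢ B)]
        congr 1
        apply filter_congr
        intro r _
        simp [hgA]
    rw [prod_congr rfl hper, ← prod_sdiff hA] at hk
    have h1 : ∏ g ∈ A, (if g ∈ A then 1 else 2 ^ B.card - 1) = 1 :=
      prod_eq_one (fun g hg => if_pos hg)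
    have h2 : ∏ g ∈ G \ A, (if g ∈ A then 1 else 2 ^ B.card - 1)
        = (2 ^ B.card - 1) ^ (G.card - A.card) := by
      have he : ∏ g ∈ G \ A, (if g ∈ A then 1 else 2 ^ B.card - 1)
          = ∏ _g ∈ G \ A, (2 ^ B.card - 1) :=
        prod_congr rfl (fun g hg => by rw [if_neg (mem_sdiff.mp hg).2])
      rw [he, prod_const, card_sdiff_of_subset hA]
    rw [h1, h2, mul_one] at hk
    convert hk using 3
  -- second factor
  have hf2 : ((S.filter fun z => ¬ z.2 ∈ B).powerset.filter fun K =>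
      ∀ m ∈ Gᶜ \ B, ¬ (A ×ˢ {m} ⊆ K.filter fun z => z.2 = m)).card
      = (2 ^ G.card - 2 ^ (G.card - A.card)) ^ (Gᶜ.card - B.card) := by
    have hk := keycount (fun z : Fin n × Fin n => z.2)
      (fun (m : Fin n) (r : Finset (Fin n × Fin n)) => ¬ (A ×ˢ {m} ⊆ r)) (Gᶜ \ B)
      (S.filter fun z => ¬ z.2 ∈ B)
      (fun y hy => mem_sdiff.mpr ⟨(mem_product.mp (mem_filter.mp hy).1).2,
        (mem_filter.mp hy).2⟩)
    have hcol : ∀ m ∈ Gᶜ \ B,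
        (S.filter fun z => ¬ z.2 ∈ B).filter (fun z => z.2 = m) = G ×ˢ {m} := by
      intro m hm
      rw [mem_sdiff] at hm
      ext z
      constructor
      · intro hz
        have h1 := mem_filter.mp hz
        have h2 := mem_filter.mp h1.1
        rw [mem_product, mem_singleton]
        exact ⟨(mem_product.mp h2.1).1, h1.2⟩
      · intro hz
        rw [mem_product, mem_singleton] at hz
        refine mem_filter.mpr ⟨mem_filter.mpr ⟨?_, hz.2 ▸ hm.2⟩, hz.2⟩
        rw [hS, mem_product]
        exact ⟨hz.1, hz.2 ▸ hm.1⟩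
    have hper : ∀ m ∈ Gᶜ \ B, (((S.filter fun z => ¬ z.2 ∈ B).filter
        (fun z => z.2 = m)).powerset.filter fun r => ¬ (A ×ˢ {m} ⊆ r)).card
        = 2 ^ G.card - 2 ^ (G.card - A.card) := by
      intro m hm
      rw [hcol m hm, card_pf_not_subset _ _ (product_subset_product hA (Subset.refl _))]
      have hc1 : (G ×ˢ {m} : Finset _).card = G.card := by
        rw [card_product, card_singleton, mul_one]
      have hc2 : ((G ×ˢ {m} : Finset _) \ (A ×ˢ {m})).card = G.card - A.card := by
        have he : (G ×ˢ {m} : Finset _) \ (A ×ˢ {m}) = (G \ A) ×ˢ {m} := by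
          ext z
          simp only [mem_sdiff, mem_product, mem_singleton]
          tauto
        rw [he, card_product, card_singleton, mul_one, card_sdiff_of_subset hA]
      rw [hc1, hc2]
    rw [prod_congr rfl hper, prod_const, card_sdiff_of_subset hB] at hk
    convert hk using 3
  rw [hf1, hf2]

lemma kappa_half (n : ℕ) (G : Finset (Fin n)) (I : Finset (Fin n × Fin n))
    (hI : I ⊆ G ×ˢ Gᶜ) :
    kappa n (1/2) (1/2) G I = (1/2 : ℝ) ^ (n + (G ×ˢ Gᶜ).card) := by
  unfold kappa
  have h1 : (1 - (1/2 : ℝ)) = 1/2 := by norm_num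
  rw [h1, ← pow_add, ← pow_add, ← pow_add]
  congr 1
  have h2 : G.card + Gᶜ.card = n := by
    rw [Finset.card_add_card_compl, Fintype.card_fin]
  have h3 : I.card ≤ (G ×ˢ Gᶜ).card := card_le_card hI
  omega

lemma kappa_half_nonneg (n : ℕ) (G : Finset (Fin n)) (I : Finset (Fin n × Fin n)) :
    0 ≤ kappa n (1/2) (1/2) G I := by
  unfold kappa
  positivity

lemma inner_bound (n : ℕ) (G : Finset (Fin n)) (a b : ℕ) :
    ∑ I ∈ (G ×ˢ Gᶜ).powerset, (numConcepts n G I : ℝ) * kappa n (1/2) (1/2) G I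
      ≥ (1/2 : ℝ) ^ (n + (G ×ˢ Gᶜ).card) *
        ((G.card.choose a * Gᶜ.card.choose b *
          ((2 ^ b - 1) ^ (G.card - a) * (2 ^ G.card - 2 ^ (G.card - a)) ^ (Gᶜ.card - b)) : ℕ) : ℝ) := by
  have hconst : ∀ I ∈ (G ×ˢ Gᶜ).powerset,
      (numConcepts n G I : ℝ) * kappa n (1/2) (1/2) G I
        = (1/2 : ℝ) ^ (n + (G ×ˢ Gᶜ).card) * (numConcepts n G I : ℝ) := by
    intro I hI
    rw [kappa_half n G I (mem_powerset.mp hI), mul_comm]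
  rw [sum_congr rfl hconst, ← mul_sum]
  apply mul_le_mul_of_nonneg_left _ (by positivity)
  -- reduce to nat sum inequality
  rw [← Nat.cast_sum]
  apply Nat.cast_le.mpr
  -- key nat computation
  have hkey : ∑ I ∈ (G ×ˢ Gᶜ).powerset,
      ((G.powersetCard a ×ˢ Gᶜ.powersetCard b).filter
        fun AB => IsConcept n G I AB.1 AB.2).card
      = G.card.choose a * Gᶜ.card.choose b *
          ((2 ^ b - 1) ^ (G.card - a) * (2 ^ G.card - 2 ^ (G.card - a)) ^ (Gᶜ.card - b)) := by
    have hswap : ∑ I ∈ (G ×ˢ Gᶜ).powerset,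
        ((G.powersetCard a ×ˢ Gᶜ.powersetCard b).filter
          fun AB => IsConcept n G I AB.1 AB.2).card
        = ∑ AB ∈ G.powersetCard a ×ˢ Gᶜ.powersetCard b,
            ((G ×ˢ Gᶜ).powerset.filter fun I => IsConcept n G I AB.1 AB.2).card := by
      simp only [card_filter]
      exact sum_comm
    rw [hswap]
    have hval : ∀ AB ∈ G.powersetCard a ×ˢ Gᶜ.powersetCard b,
        ((G ×ˢ Gᶜ).powerset.filter fun I => IsConcept n G I AB.1 AB.2).card
          = (2 ^ b - 1) ^ (G.card - a) * (2 ^ G.card - 2 ^ (G.card - a)) ^ (Gᶜ.card - b) := by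
      intro AB hAB
      rw [mem_product] at hAB
      obtain ⟨hA, hB⟩ := hAB
      rw [mem_powersetCard] at hA hB
      rw [concept_count n G AB.1 AB.2 hA.1 hB.1, hA.2, hB.2]
    rw [sum_congr rfl hval, sum_const, card_product, card_powersetCard, card_powersetCard,
      smul_eq_mul, mul_assoc]
  rw [← hkey]
  apply sum_le_sum
  intro I _
  exact card_le_card (filter_subset_filter _ (subset_univ _))

lemma expected_ge (n a b : ℕ) :
    expectedConcepts n (1/2) (1/2)
      ≥ (n.choose (n/2) : ℝ) * ((1/2:ℝ) ^ (n + (n/2) * (n - n/2)) *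
        (((n/2).choose a * (n - n/2).choose b *
          ((2^b - 1)^(n/2 - a) * (2^(n/2) - 2^(n/2 - a))^((n - n/2) - b)) : ℕ) : ℝ)) := by
  set v : ℝ := (1/2:ℝ) ^ (n + (n/2) * (n - n/2)) *
        (((n/2).choose a * (n - n/2).choose b *
          ((2^b - 1)^(n/2 - a) * (2^(n/2) - 2^(n/2 - a))^((n - n/2) - b)) : ℕ) : ℝ) with hv
  have key : ∀ G ∈ (univ.filter fun G : Finset (Fin n) => G.card = n/2),
      ∑ I ∈ (G ×ˢ Gᶜ).powerset, (numConcepts n G I : ℝ) * kappa n (1/2) (1/2) G I ≥ v := by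
    intro G hG
    have hGc : G.card = n/2 := (mem_filter.mp hG).2
    have hGcc : Gᶜ.card = n - n/2 := by rw [card_compl, Fintype.card_fin, hGc]
    have hprod : (G ×ˢ Gᶜ).card = (n/2) * (n - n/2) := by
      rw [card_product, hGc, hGcc]
    have hb := inner_bound n G a b
    rw [hGc, hGcc, hprod] at hb
    exact hb
  have step1 : expectedConcepts n (1/2) (1/2)
      ≥ ∑ G ∈ (univ.filter fun G : Finset (Fin n) => G.card = n/2),
          ∑ I ∈ (G ×ˢ Gᶜ).powerset, (numConcepts n G I : ℝ) * kappa n (1/2) (1/2) G I := by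
    unfold expectedConcepts
    apply sum_le_sum_of_subset_of_nonneg (subset_univ _)
    intro G _ _
    apply sum_nonneg
    intro I _
    exact mul_nonneg (Nat.cast_nonneg _) (kappa_half_nonneg n G I)
  have step2 : ∑ G ∈ (univ.filter fun G : Finset (Fin n) => G.card = n/2),
      ∑ I ∈ (G ×ˢ Gᶜ).powerset, (numConcepts n G I : ℝ) * kappa n (1/2) (1/2) G I
      ≥ ((univ.filter fun G : Finset (Fin n) => G.card = n/2).card : ℝ) * v := by
    calc ∑ G ∈ (univ.filter fun G : Finset (Fin n) => G.card = n/2),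
        ∑ I ∈ (G ×ˢ Gᶜ).powerset, (numConcepts n G I : ℝ) * kappa n (1/2) (1/2) G I
        ≥ ∑ _G ∈ (univ.filter fun G : Finset (Fin n) => G.card = n/2), v :=
          sum_le_sum key
      _ = ((univ.filter fun G : Finset (Fin n) => G.card = n/2).card : ℝ) * v := by
          rw [sum_const, nsmul_eq_mul]
  have hcard : (univ.filter fun G : Finset (Fin n) => G.card = n/2).card = n.choose (n/2) := by
    have : (univ.filter fun G : Finset (Fin n) => G.card = n/2)
        = Finset.powersetCard (n/2) univ := by
      rw [powersetCard_eq_filter, powerset_univ]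
    rw [this, card_powersetCard, card_univ, Fintype.card_fin]
  rw [hcard] at step2
  exact ge_trans step1 (ge_trans step2 (le_of_eq (by rw [hv])))

lemma lt_two_pow_half (n : ℕ) : n < 2 ^ (n / 2 + 1) := by
  induction n using Nat.strong_induction_on with
  | _ n ih =>
    rcases n with _ | _ | m
    · decide
    · decide
    · have h1 := ih m (by omega)
      have h2 : (m + 2) / 2 + 1 = (m / 2 + 1) + 1 := by omega
      have h3 : 1 < 2 ^ (m / 2 + 1) := Nat.one_lt_two_pow_iff.mpr (by omega)
      rw [h2, pow_succ]
      omega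

lemma aSeq_le (n : ℕ) (hn : 0 < n) : aSeq n ≤ n / 2 := by
  have h1 : aSeq n = Nat.log 2 n := by
    unfold aSeq
    rw [show Real.log (n:ℝ) / Real.log 2 = Real.logb 2 (n:ℝ) from rfl,
      ← Int.floor_toNat, show (2:ℝ) = ((2:ℕ):ℝ) by norm_num,
      Real.floor_logb_natCast (Nat.cast_nonneg n), Int.log_natCast,
      Int.toNat_natCast]
  have h2 : Nat.log 2 n < n / 2 + 1 :=
    (Nat.log_lt_iff_lt_pow (by norm_num) (by omega)).mpr (lt_two_pow_half n)
  omega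

/-- For `K_n ~ κ_{n,1/2,1/2}`, the expected number of formal concepts
is at least the singled-out term: `E[|𝔅(K_n)|] ≥ t_n`. -/
theorem expected_concepts_ge_tSeq (n : ℕ) (hn : 0 < n) :
    expectedConcepts n (1 / 2) (1 / 2) ≥ tSeq n := by
  have ha : aSeq n ≤ n / 2 := aSeq_le n hn
  set a := aSeq n with hadef
  set b := bSeq n with hbdef
  set c := cSeq n with hcdef
  have hb : b = a + n % 2 := rfl
  have hc : c = n / 2 - a := rfl
  have hmod : n % 2 < 2 := Nat.mod_lt n (by norm_num)
  have hdiv : n = 2 * (n / 2) + n % 2 := (Nat.div_add_mod n 2).symm ▸ by omega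
  have hac : a + c = n / 2 := by omega
  have hbc : b + c = n - n / 2 := by omega
  have hn2 : n = a + b + 2 * c := by omega
  refine ge_trans (expected_ge n a b) ?_
  apply le_of_eq
  -- rewrite nat subtractions
  have e1 : n / 2 - a = c := by omega
  have e2 : (n - n / 2) - b = c := by omega
  rw [e1, e2]
  -- factorials identity
  have hh : n / 2 ≤ n := Nat.div_le_self n 2
  have hkey : n.choose (n / 2) * (n / 2).choose a * (n - n / 2).choose b *
      (a.factorial * b.factorial * c.factorial * c.factorial) = n.factorial := by
    have f1 := Nat.choose_mul_factorial_mul_factorial hh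
    have f2 := Nat.choose_mul_factorial_mul_factorial (show a ≤ n / 2 from ha)
    have f3 := Nat.choose_mul_factorial_mul_factorial (show b ≤ n - n / 2 by omega)
    rw [show n / 2 - a = c from e1] at f2
    rw [show (n - n / 2) - b = c from e2] at f3
    calc n.choose (n / 2) * (n / 2).choose a * (n - n / 2).choose b *
        (a.factorial * b.factorial * c.factorial * c.factorial)
        = n.choose (n / 2) * (((n / 2).choose a * a.factorial * c.factorial) *
            ((n - n / 2).choose b * b.factorial * c.factorial)) := by ring
      _ = n.choose (n / 2) * ((n / 2).factorial * (n - n / 2).factorial) := by rw [f2, f3]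
      _ = n.factorial := by rw [← f1]; ring
  have hfacpos : (0:ℝ) < (a.factorial : ℝ) * b.factorial * c.factorial * c.factorial := by
    positivity
  have hmult : multinomialSeq n
      = (n.choose (n / 2) : ℝ) * (n / 2).choose a * (n - n / 2).choose b := by
    unfold multinomialSeq
    rw [div_eq_iff (ne_of_gt hfacpos)]
    exact_mod_cast hkey.symm
  -- power identity
  have hza : (2:ℝ) ^ (-(a : ℤ)) = ((2:ℝ) ^ a)⁻¹ := by rw [zpow_neg, zpow_natCast]
  have hzb : (2:ℝ) ^ (-(b : ℤ)) = ((2:ℝ) ^ b)⁻¹ := by rw [zpow_neg, zpow_natCast]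
  have hpa : (0:ℝ) < 2 ^ a := by positivity
  have hpb : (0:ℝ) < 2 ^ b := by positivity
  have hpow : ((1:ℝ)/2) ^ (n + (n/2) * (n - n/2)) * ((2^b - 1)^c * (2^(n/2) - 2^c)^c)
      = (1/2 : ℝ) ^ (a + c) * (1/2 : ℝ) ^ (b + c) * (1/2 : ℝ) ^ (a * b) *
        (1 - (2:ℝ) ^ (-(a : ℤ))) ^ c * (1 - (2:ℝ) ^ (-(b : ℤ))) ^ c := by
    rw [hza, hzb, ← hbc, ← hac]
    rw [show n + (a + c) * (b + c) = (a + b + 2*c) + (a + c) * (b + c) by omega]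
    have ea : (1 - ((2:ℝ)^a)⁻¹) = (2^a - 1) / 2^a := by field_simp
    have eb : (1 - ((2:ℝ)^b)⁻¹) = (2^b - 1) / 2^b := by field_simp
    rw [ea, eb, div_pow, div_pow]
    have hsplit : ((2:ℝ)^(a+c) - 2^c) = 2^c * (2^a - 1) := by
      rw [pow_add]; ring
    rw [hsplit]
    simp only [one_div, inv_pow, mul_pow]
    rw [show (a + b + 2*c) + (a + c) * (b + c) = (a+c) + ((b+c) + (a*b + (a*c + (b*c + c*c)))) by ring]
    simp only [pow_add, pow_mul]
    field_simp
    have da : ((2:ℝ)^a)^c * ((2^a-1)/2^a)^c = (2^a-1)^c := by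
      rw [← mul_pow, mul_div_cancel₀ _ hpa.ne']
    have db : ((2:ℝ)^b)^c * ((2^b-1)/2^b)^c = (2^b-1)^c := by
      rw [← mul_pow, mul_div_cancel₀ _ hpb.ne']
    simp only [one_pow, one_mul]
    rw [← da, ← db]
    ring
  -- assemble
  unfold tSeq
  rw [← hadef, ← hbdef, ← hcdef, hmult]
  have hcast : (((n/2).choose a * (n - n/2).choose b *
      ((2^b - 1)^c * (2^(n/2) - 2^c)^c) : ℕ) : ℝ)
      = ((n/2).choose a : ℝ) * ((n - n/2).choose b : ℝ) *
        (((2:ℝ)^b - 1)^c * ((2:ℝ)^(n/2) - 2^c)^c) := by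
    have hle1 : (1:ℕ) ≤ 2^b := Nat.one_le_two_pow
    have hle2 : (2:ℕ)^c ≤ 2^(n/2) := Nat.pow_le_pow_right (by norm_num) (by omega)
    push_cast [Nat.cast_sub hle1, Nat.cast_sub hle2]
    ring
  rw [hcast]
  rw [← hpow]
  ring
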